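/- (Theorem 10, parametric uncertainties with convexly constrained terminal cost). Let α < 0 < β be reals. For j = 1, 2, let A_j ∈ ℝ^{k_j×k_j} be Hurwitz, B_j ∈ ℝ^{k_j×nz}, C_j ∈ ℝ^{m_j×k_j}, D_j ∈ ℝ^{m_j×nz}, and set A_Ψ := diag(A₁, A₂), B_Ψ := diag(B₁, B₂), C_Ψ := diag(C₁, C₂), D_Ψ := diag(D₁, D₂), J := [I_{nz}; I_{nz}], T := [[I_{nz}, −β⁻¹ I_{nz}],[−α I_{nz}, I_{nz}]]. Let P ∈ ℝ^{m₁×m₂} and M := [[0, P],[Pᵀ, 0]]. Suppose there exist R = Rᵀ ∈ ℝ^{(k₁+k₂)×(k₁+k₂)} (partitioned into blocks R₁₁ ∈ ℝ^{k₁×k₁}, R₁₂, R₂₁, R₂₂ conformably with diag(A₁,A₂)) and K ∈ ℝ^{k₁×k₂} such that KYP(R, M; A_Ψ, B_Ψ J, C_Ψ, D_Ψ J) ≻ 0 and [[R₁₁, R₁₂ − K],[R₂₁ − Kᵀ, R₂₂]] ≺ 0. Then for every δ ∈ [α, β], every z ∈ L2e^{nz} and every T' > 0, the filter trajectory ξ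 = (ξ₁, ξ₂) of (A_Ψ, B_Ψ T, C_Ψ, D_Ψ T) driven by u := (z, δ·z), with output y, satisfies ∫₀^{T'} y(t)ᵀ M y(t) dt + 2 ξ₁(T')ᵀ K ξ₂(T') ≥ 0; that is, the multiplication operator Δ_δ(z) := δ·z satisfies a finite-horizon IQC with terminal cost matrix [[0, K],[Kᵀ, 0]] with respect to the filter (A_Ψ, B_Ψ T, C_Ψ, D_Ψ T) and middle matrix M. -/

import Mathlib

open MeasureTheory Matrix

noncomputable section

namespace IQCPaper

/-- Membership in `L2e^p`: measurable and square integrable on every bounded interval. -/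
def MemL2e (p : ℕ) (f : ℝ → Fin p → ℝ) : Prop :=
  Measurable f ∧ ∀ T : ℝ, 0 < T → IntegrableOn (fun t => ‖f t‖ ^ 2) (Set.Ioc 0 T) volume

/-- Membership in `L2^p`. -/
def MemL2 (p : ℕ) (f : ℝ → Fin p → ℝ) : Prop :=
  MemL2e p f ∧ IntegrableOn (fun t => ‖f t‖ ^ 2) (Set.Ioi 0) volume

/-- The `L2` norm on `[0,∞)`. -/
def L2norm (p : ℕ) (f : ℝ → Fin p → ℝ) : ℝ :=
  Real.sqrt (∫ t in Set.Ioi (0 : ℝ), ‖f t‖ ^ 2)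

/-- The filter trajectory: absolutely continuous solution of
`ξ' = A ξ + B u`, `ξ(0) = 0`, written in integral form. -/
def IsFilterTraj {k m : Type*} [Fintype k] [Fintype m]
    (A : Matrix k k ℝ) (B : Matrix k m ℝ)
    (u : ℝ → m → ℝ) (ξ : ℝ → k → ℝ) : Prop :=
  Continuous ξ ∧ ξ 0 = 0 ∧
    ∀ t : ℝ, 0 ≤ t → ξ t = ∫ s in (0 : ℝ)..t, (A.mulVec (ξ s) + B.mulVec (u s))

/-- The KYP matrix. -/
def KYP {n m q : Type*} [Fintype n] [Fintype m] [Fintype q]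
    (X : Matrix n n ℝ) (M : Matrix q q ℝ)
    (A : Matrix n n ℝ) (B : Matrix n m ℝ)
    (C : Matrix q n ℝ) (D : Matrix q m ℝ) : Matrix (n ⊕ m) (n ⊕ m) ℝ :=
  fromBlocks (Aᵀ * X + X * A + Cᵀ * M * C) (X * B + Cᵀ * M * D)
    (Bᵀ * X + Dᵀ * M * C) (Dᵀ * M * D)

/-- A real square matrix is Hurwitz if all its complex eigenvalues have negative real part. -/
def IsHurwitz {n : Type*} [Fintype n] [DecidableEq n] (A : Matrix n n ℝ) : Prop :=
  ∀ μ ∈ spectrum ℂ (A.map Complex.ofReal), μ.re < 0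

/-- Finite-horizon IQC with terminal cost matrix `Z`. -/
def FiniteHorizonIQC {k q : Type*} [Fintype k] [Fintype q] (nz nw : ℕ)
    (AΨ : Matrix k k ℝ) (BΨ : Matrix k (Fin nz ⊕ Fin nw) ℝ)
    (CΨ : Matrix q k ℝ) (DΨ : Matrix q (Fin nz ⊕ Fin nw) ℝ)
    (M : Matrix q q ℝ) (Z : Matrix k k ℝ)
    (Δ : (ℝ → Fin nz → ℝ) → (ℝ → Fin nw → ℝ)) : Prop :=
  ∀ z : ℝ → Fin nz → ℝ, MemL2e nz z →
    ∀ ξ : ℝ → k → ℝ,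
      IsFilterTraj AΨ BΨ (fun t => Sum.elim (z t) (Δ z t)) ξ →
      ∀ T : ℝ, 0 < T →
        0 ≤ (∫ t in (0 : ℝ)..T,
              (CΨ.mulVec (ξ t) + DΨ.mulVec (Sum.elim (z t) (Δ z t))) ⬝ᵥ
                M.mulVec (CΨ.mulVec (ξ t) + DΨ.mulVec (Sum.elim (z t) (Δ z t))))
            + (ξ T) ⬝ᵥ Z.mulVec (ξ T)

/-- Factorization identities for `(Z̃, M̃, C̃, D̃)`. -/
def FactIds {k m q : Type*} [Fintype k] [Fintype m] [Fintype q]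
    (AΨ : Matrix k k ℝ) (BΨ : Matrix k m ℝ) (CΨ : Matrix q k ℝ) (DΨ : Matrix q m ℝ)
    (M : Matrix q q ℝ) (Z' : Matrix k k ℝ) (M' : Matrix m m ℝ)
    (C' : Matrix m k ℝ) (D' : Matrix m m ℝ) : Prop :=
  Z'.IsSymm ∧ M'.IsSymm ∧
    AΨᵀ * Z' + Z' * AΨ + CΨᵀ * M * CΨ = C'ᵀ * M' * C' ∧
    Z' * BΨ + CΨᵀ * M * DΨ = C'ᵀ * M' * D' ∧
    DΨᵀ * M * DΨ = D'ᵀ * M' * D'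

/-- `(Z̃, M̃, C̃, D̃)` certifies a canonical factorization of `(AΨ, BΨ, CΨ, DΨ, M)`. -/
def CertifiesCanonical {k m q : Type*} [Fintype k] [Fintype m] [Fintype q]
    [DecidableEq k] [DecidableEq m]
    (AΨ : Matrix k k ℝ) (BΨ : Matrix k m ℝ) (CΨ : Matrix q k ℝ) (DΨ : Matrix q m ℝ)
    (M : Matrix q q ℝ) (Z' : Matrix k k ℝ) (M' : Matrix m m ℝ)
    (C' : Matrix m k ℝ) (D' : Matrix m m ℝ) : Prop :=
  FactIds AΨ BΨ CΨ DΨ M Z' M' C' D' ∧ IsUnit D' ∧ IsHurwitz (AΨ - BΨ * D'⁻¹ * C')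

/-- A causal operator. -/
def Causal (nz nw : ℕ) (Δ : (ℝ → Fin nz → ℝ) → (ℝ → Fin nw → ℝ)) : Prop :=
  ∀ z z' : ℝ → Fin nz → ℝ, ∀ T : ℝ, 0 < T →
    (∀ᵐ t ∂(volume.restrict (Set.Icc (0 : ℝ) T)), z t = z' t) →
    (∀ᵐ t ∂(volume.restrict (Set.Icc (0 : ℝ) T)), Δ z t = Δ z' t)

/-- A bounded operator from `L2^{nz}` to `L2^{nw}`. -/
def BoundedOp (nz nw : ℕ) (Δ : (ℝ → Fin nz → ℝ) → (ℝ → Fin nw → ℝ)) : Prop :=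
  ∃ c : ℝ, 0 ≤ c ∧ ∀ z, MemL2 nz z → MemL2 nw (Δ z) ∧ L2norm nw (Δ z) ≤ c * L2norm nz z


section AuxLemmas
open Set
variable {T : ℝ} {p : ℕ} {z : ℝ → Fin p → ℝ}


lemma integrableOn_mul_of_bound {f φ : ℝ → ℝ}
    (hf : IntegrableOn f (Ioc 0 T) volume)
    (hφm : AEStronglyMeasurable φ (volume.restrict (Ioc 0 T)))
    {Cφ : ℝ} (hbd : ∀ t ∈ Ioc (0:ℝ) T, |φ t| ≤ Cφ) :
    IntegrableOn (fun t => φ t * f t) (Ioc 0 T) volume := by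
  refine (hf.norm.const_mul Cφ).mono' (hφm.mul hf.aestronglyMeasurable) ?_
  filter_upwards [ae_restrict_mem measurableSet_Ioc] with t ht
  calc ‖φ t * f t‖ = |φ t| * ‖f t‖ := by simp [Real.norm_eq_abs, abs_mul]
    _ ≤ Cφ * ‖f t‖ := mul_le_mul_of_nonneg_right (hbd t ht) (norm_nonneg _)

lemma continuous_mul_integrableOn {f φ : ℝ → ℝ} (hφ : Continuous φ)
    (hf : IntegrableOn f (Ioc 0 T) volume) :
    IntegrableOn (fun t => φ t * f t) (Ioc 0 T) volume := by
  obtain ⟨C, hC⟩ := (isCompact_Icc (a := (0:ℝ)) (b := T)).exists_bound_of_continuousOn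
    hφ.continuousOn
  exact integrableOn_mul_of_bound hf hφ.aestronglyMeasurable
    (fun t ht => by simpa using hC t (Ioc_subset_Icc_self ht))

lemma primitive_aesm {g : ℝ → ℝ} (hg : IntegrableOn g (Ioc 0 T) volume) :
    AEStronglyMeasurable (fun t => ∫ s in Ioc (0:ℝ) t, g s) (volume.restrict (Ioc 0 T)) := by
  have h : IntegrableOn g (Icc 0 T) volume := by
    rwa [integrableOn_Icc_iff_integrableOn_Ioc]
  have := (intervalIntegral.continuousOn_primitive (f := g) (a := 0) (b := T) (μ := volume) h).aemeasurable
    (μ := volume) measurableSet_Icc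
  exact (this.mono_measure (Measure.restrict_mono Ioc_subset_Icc_self le_rfl)).aestronglyMeasurable

lemma primitive_bound {g : ℝ → ℝ} (hg : IntegrableOn g (Ioc 0 T) volume) :
    ∀ t ∈ Ioc (0:ℝ) T, |∫ s in Ioc (0:ℝ) t, g s| ≤ ∫ s in Ioc (0:ℝ) T, |g s| := by
  intro t ht
  calc |∫ s in Ioc (0:ℝ) t, g s| ≤ ∫ s in Ioc (0:ℝ) t, |g s| := by
        simpa [Real.norm_eq_abs] using
          norm_integral_le_integral_norm (μ := volume.restrict (Ioc (0:ℝ) t)) g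
    _ ≤ ∫ s in Ioc (0:ℝ) T, |g s| := by
        apply setIntegral_mono_set (by have := hg.norm; simp only [Real.norm_eq_abs] at this; exact this)
        · filter_upwards with s using abs_nonneg _
        · exact HasSubset.Subset.eventuallyLE (Ioc_subset_Ioc le_rfl ht.2)

lemma mul_primitive_integrable {f g : ℝ → ℝ}
    (hf : IntegrableOn f (Ioc 0 T) volume) (hg : IntegrableOn g (Ioc 0 T) volume) :
    IntegrableOn (fun t => f t * ∫ s in Ioc (0:ℝ) t, g s) (Ioc 0 T) volume := by
  have := integrableOn_mul_of_bound hf (primitive_aesm hg) (primitive_bound hg)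
  exact this.congr_fun (fun t _ => mul_comm _ _) measurableSet_Ioc

lemma primitive_mul_integrable {f g : ℝ → ℝ}
    (hf : IntegrableOn f (Ioc 0 T) volume) (hg : IntegrableOn g (Ioc 0 T) volume) :
    IntegrableOn (fun t => (∫ s in Ioc (0:ℝ) t, f s) * g t) (Ioc 0 T) volume :=
  integrableOn_mul_of_bound hg (primitive_aesm hf) (primitive_bound hf)


lemma swap_lemma (hT : 0 ≤ T) {f g : ℝ → ℝ} (hfm : Measurable f) (hgm : Measurable g)
    (hf : IntegrableOn f (Ioc 0 T) volume) (hg : IntegrableOn g (Ioc 0 T) volume) :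
    ∫ t in Ioc (0:ℝ) T, (f t * ∫ s in Ioc t T, g s)
      = ∫ t in Ioc (0:ℝ) T, (∫ s in Ioc (0:ℝ) t, f s) * g t := by
  set μ := volume.restrict (Ioc (0:ℝ) T) with hμ
  set H : ℝ → ℝ → ℝ := fun t s => f t * Set.indicator (Set.Ioi t) g s with hH
  have hHm : Measurable (Function.uncurry H) := by
    apply (hfm.comp measurable_fst).mul
    have : (fun p : ℝ × ℝ => Set.indicator (Set.Ioi p.1) g p.2)
        = fun p : ℝ × ℝ => if p.1 < p.2 then g p.2 else 0 := by
      funext p; simp [Set.indicator_apply]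
    rw [this]
    exact Measurable.ite (measurableSet_lt measurable_fst measurable_snd)
      (hgm.comp measurable_snd) measurable_const
  have hHi : Integrable (Function.uncurry H) (μ.prod μ) := by
    have base : Integrable (fun p : ℝ × ℝ => f p.1 * g p.2) (μ.prod μ) := hf.mul_prod hg
    refine base.norm.mono' hHm.aestronglyMeasurable ?_
    filter_upwards with p
    simp only [Function.uncurry, hH, Set.indicator_apply, Set.mem_Ioi]
    split_ifs
    · simp
    · simp [abs_nonneg, abs_mul]
      positivity
  have swap := integral_integral_swap hHi
  have hL : ∫ t in Ioc (0:ℝ) T, ∫ s in Ioc (0:ℝ) T, H t s = ∫ t in Ioc (0:ℝ) T, (f t * ∫ s in Ioc t T, g s) := by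
    apply integral_congr_ae
    filter_upwards [ae_restrict_mem measurableSet_Ioc] with t ht
    have : ∫ s in Ioc (0:ℝ) T, H t s = f t * ∫ s in Ioc (0:ℝ) T, Set.indicator (Set.Ioi t) g s := by
      simp [hH, integral_const_mul]
    have hset : Set.Ioi t ∩ Ioc (0:ℝ) T = Ioc t T := by
      ext s
      simp only [Set.mem_inter_iff, Set.mem_Ioi, Set.mem_Ioc]
      constructor
      · rintro ⟨h1, h2, h3⟩; exact ⟨h1, h3⟩
      · rintro ⟨h1, h2⟩; exact ⟨h1, lt_trans ht.1 h1, h2⟩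
    rw [this, integral_indicator measurableSet_Ioi,
      Measure.restrict_restrict measurableSet_Ioi, hset]
  have hR : ∫ s in Ioc (0:ℝ) T, ∫ t in Ioc (0:ℝ) T, H t s = ∫ t in Ioc (0:ℝ) T, (∫ s in Ioc (0:ℝ) t, f s) * g t := by
    apply integral_congr_ae
    filter_upwards [ae_restrict_mem measurableSet_Ioc] with s hs
    have h1 : (fun t => H t s) = fun t => Set.indicator (Set.Iio s) f t * g s := by
      funext t
      by_cases h : t < s <;>
        simp [hH, Set.indicator_apply, Set.mem_Ioi, Set.mem_Iio, h]
    rw [h1]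
    have : ∫ t in Ioc (0:ℝ) T, Set.indicator (Set.Iio s) f t * g s
        = (∫ t in Ioc (0:ℝ) T, Set.indicator (Set.Iio s) f t) * g s := integral_mul_const _ _
    rw [this, integral_indicator measurableSet_Iio,
      Measure.restrict_restrict measurableSet_Iio]
    have hset : Set.Iio s ∩ Ioc (0:ℝ) T = Ioo 0 s := by
      ext t
      simp only [Set.mem_inter_iff, Set.mem_Iio, Set.mem_Ioc, Set.mem_Ioo]
      constructor
      · rintro ⟨h1, h2, h3⟩; exact ⟨h2, h1⟩
      · rintro ⟨h1, h2⟩; exact ⟨h2, h1, (le_of_lt h2).trans hs.2⟩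
    rw [hset, ← integral_Ioc_eq_integral_Ioo]
  rw [← hL, ← hR]
  exact swap

lemma primitive_mul_primitive (hT : 0 ≤ T) {f g : ℝ → ℝ}
    (hfm : Measurable f) (hgm : Measurable g)
    (hf : IntegrableOn f (Ioc 0 T) volume) (hg : IntegrableOn g (Ioc 0 T) volume) :
    (∫ t in Ioc (0:ℝ) T, f t) * (∫ t in Ioc (0:ℝ) T, g t)
      = ∫ t in Ioc (0:ℝ) T,
          (f t * (∫ s in Ioc (0:ℝ) t, g s) + (∫ s in Ioc (0:ℝ) t, f s) * g t) := by
  have key : ∀ t ∈ Ioc (0:ℝ) T,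
      f t * (∫ s in Ioc (0:ℝ) T, g s)
        = f t * (∫ s in Ioc (0:ℝ) t, g s) + f t * (∫ s in Ioc t T, g s) := by
    intro t ht
    rw [← mul_add, ← setIntegral_union (Set.Ioc_disjoint_Ioc_of_le le_rfl) measurableSet_Ioc
      (hg.mono_set (Ioc_subset_Ioc le_rfl ht.2)) (hg.mono_set (Ioc_subset_Ioc ht.1.le le_rfl))]
    rw [Set.Ioc_union_Ioc_eq_Ioc ht.1.le ht.2]
  have htail : IntegrableOn (fun t => f t * ∫ s in Ioc t T, g s) (Ioc 0 T) volume := by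
    have hint : Integrable (fun t => f t * (∫ s in Ioc (0:ℝ) T, g s)
        - f t * ∫ s in Ioc (0:ℝ) t, g s) (volume.restrict (Ioc (0:ℝ) T)) :=
      (hf.mul_const _).sub (mul_primitive_integrable hf hg)
    refine hint.congr ?_
    filter_upwards [ae_restrict_mem measurableSet_Ioc] with t ht
    have := key t ht
    linarith
  calc (∫ t in Ioc (0:ℝ) T, f t) * (∫ t in Ioc (0:ℝ) T, g t)
      = ∫ t in Ioc (0:ℝ) T, f t * (∫ s in Ioc (0:ℝ) T, g s) := (integral_mul_const _ _).symm
    _ = ∫ t in Ioc (0:ℝ) T,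
          (f t * (∫ s in Ioc (0:ℝ) t, g s) + f t * (∫ s in Ioc t T, g s)) := by
        apply setIntegral_congr_fun measurableSet_Ioc
        intro t ht; exact key t ht
    _ = (∫ t in Ioc (0:ℝ) T, f t * (∫ s in Ioc (0:ℝ) t, g s))
          + ∫ t in Ioc (0:ℝ) T, f t * (∫ s in Ioc t T, g s) := by
        exact integral_add (mul_primitive_integrable hf hg) htail
    _ = (∫ t in Ioc (0:ℝ) T, f t * (∫ s in Ioc (0:ℝ) t, g s))
          + ∫ t in Ioc (0:ℝ) T, (∫ s in Ioc (0:ℝ) t, f s) * g t := by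
        rw [swap_lemma hT hfm hgm hf hg]
    _ = _ := (integral_add (mul_primitive_integrable hf hg)
          (primitive_mul_integrable hf hg)).symm


lemma sum_sum_eq_dot {k : Type*} [Fintype k] (R : Matrix k k ℝ) (a b : k → ℝ) :
    a ⬝ᵥ R.mulVec b = ∑ i, ∑ j, R i j * (a i * b j) := by
  simp only [dotProduct, Matrix.mulVec, Finset.mul_sum]
  exact Finset.sum_congr rfl fun i _ => Finset.sum_congr rfl fun j _ => by ring

lemma energy_identity {k : Type*} [Fintype k] (hT : 0 ≤ T)
    (R : Matrix k k ℝ)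
    (g ξ : ℝ → k → ℝ) (hgm : Measurable g)
    (hgi : IntegrableOn g (Ioc 0 T) volume)
    (hξc : Continuous ξ)
    (hξ : ∀ t : ℝ, 0 ≤ t → ξ t = ∫ s in (0:ℝ)..t, g s) :
    ξ T ⬝ᵥ R.mulVec (ξ T)
      = ∫ t in Ioc (0:ℝ) T, (g t ⬝ᵥ R.mulVec (ξ t) + ξ t ⬝ᵥ R.mulVec (g t)) := by
  have hgmc : ∀ i, Measurable (fun t => g t i) :=
    fun i => (measurable_pi_apply i).comp hgm
  have hgci : ∀ i, IntegrableOn (fun t => g t i) (Ioc 0 T) volume := by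
    intro i
    exact (ContinuousLinearMap.proj (R := ℝ) (φ := fun _ : k => ℝ) i).integrable_comp hgi
  have hcomp : ∀ (i : k) (t : ℝ), 0 ≤ t → t ≤ T → ξ t i = ∫ s in Ioc (0:ℝ) t, g s i := by
    intro i t ht hle
    rw [hξ t ht, intervalIntegral.integral_of_le ht]
    exact ((ContinuousLinearMap.proj (R := ℝ) (φ := fun _ : k => ℝ) i).integral_comp_comm
      (hgi.mono_set (Ioc_subset_Ioc le_rfl hle))).symm
  have main : ∀ i j, ξ T i * ξ T j
      = ∫ t in Ioc (0:ℝ) T, (g t i * ξ t j + ξ t i * g t j) := by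
    intro i j
    rw [hcomp i T hT le_rfl, hcomp j T hT le_rfl,
      primitive_mul_primitive hT (hgmc i) (hgmc j) (hgci i) (hgci j)]
    apply setIntegral_congr_fun measurableSet_Ioc
    intro t ht
    simp only
    rw [← hcomp j t ht.1.le ht.2, ← hcomp i t ht.1.le ht.2]
  have hint1 : ∀ i j, IntegrableOn
      (fun t => g t i * ξ t j + ξ t i * g t j) (Ioc 0 T) volume := by
    intro i j
    have h1 : IntegrableOn (fun t => ξ t j * g t i) (Ioc 0 T) volume :=
      continuous_mul_integrableOn ((continuous_apply j).comp hξc) (hgci i)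
    have h2 : IntegrableOn (fun t => ξ t i * g t j) (Ioc 0 T) volume :=
      continuous_mul_integrableOn ((continuous_apply i).comp hξc) (hgci j)
    exact (h1.congr_fun (fun t _ => mul_comm _ _) measurableSet_Ioc).add h2
  calc ξ T ⬝ᵥ R.mulVec (ξ T) = ∑ i, ∑ j, R i j * (ξ T i * ξ T j) := sum_sum_eq_dot R _ _
    _ = ∑ i, ∑ j, ∫ t in Ioc (0:ℝ) T, R i j * (g t i * ξ t j + ξ t i * g t j) := by
        refine Finset.sum_congr rfl fun i _ => Finset.sum_congr rfl fun j _ => ?_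
        rw [main i j, MeasureTheory.integral_const_mul]
    _ = ∫ t in Ioc (0:ℝ) T, ∑ i, ∑ j, R i j * (g t i * ξ t j + ξ t i * g t j) := by
        rw [integral_finset_sum]
        · exact Finset.sum_congr rfl fun i _ => (integral_finset_sum _
            (fun j _ => ((hint1 i j).const_mul _))).symm
        · intro i _
          exact integrable_finset_sum _ (fun j _ => ((hint1 i j).const_mul _))
    _ = _ := by
        apply setIntegral_congr_fun measurableSet_Ioc
        intro t _
        simp only
        rw [sum_sum_eq_dot R (g t) (ξ t), sum_sum_eq_dot R (ξ t) (g t),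
          ← Finset.sum_add_distrib]
        refine Finset.sum_congr rfl fun i _ => ?_
        rw [← Finset.sum_add_distrib]
        refine Finset.sum_congr rfl fun j _ => by ring



lemma elim_add {k1 k2 : Type*} (a c : k1 → ℝ) (b d : k2 → ℝ) :
    Sum.elim a b + Sum.elim c d = Sum.elim (a + c) (b + d) := by
  funext i; cases i <;> simp

lemma blockdiag_mulVec {k1 k2 n1 n2 : Type*} [Fintype n1] [Fintype n2]
    (A₁ : Matrix k1 n1 ℝ) (A₂ : Matrix k2 n2 ℝ) (x : n1 → ℝ) (y : n2 → ℝ) :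
    (fromBlocks A₁ 0 0 A₂) *ᵥ Sum.elim x y = Sum.elim (A₁ *ᵥ x) (A₂ *ᵥ y) := by
  rw [fromBlocks_mulVec]
  simp

lemma Tm_mulVec {nz : Type*} [Fintype nz] [DecidableEq nz] (α β δ : ℝ)
    (zv : nz → ℝ) :
    (fromBlocks 1 (-β⁻¹ • (1 : Matrix nz nz ℝ)) (-α • (1 : Matrix nz nz ℝ)) 1) *ᵥ
        Sum.elim zv (δ • zv)
      = Sum.elim ((1 - δ * β⁻¹) • zv) ((δ - α) • zv) := by
  rw [fromBlocks_mulVec]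
  funext i
  cases i <;>
    simp [Matrix.neg_mulVec, smul_mulVec, one_mulVec, Matrix.mulVec_smul,
      Pi.smul_apply, smul_eq_mul, Sum.elim_comp_inl, Sum.elim_comp_inr, sub_eq_add_neg] <;>
    ring

lemma smulblock_mulVec {k1 k2 : Type*} [Fintype k1] [Fintype k2] [DecidableEq k1]
    [DecidableEq k2] (c d : ℝ) (x : k1 → ℝ) (y : k2 → ℝ) :
    (fromBlocks (c • (1 : Matrix k1 k1 ℝ)) 0 0 (d • (1 : Matrix k2 k2 ℝ))) *ᵥ Sum.elim x y
      = Sum.elim (c • x) (d • y) := by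
  rw [fromBlocks_mulVec]
  simp [smul_mulVec, one_mulVec]

lemma J_mulVec {nz k1 k2 : Type*} [Fintype nz] [Fintype k1] [Fintype k2] [DecidableEq nz]
    (B₁ : Matrix k1 nz ℝ) (B₂ : Matrix k2 nz ℝ) (w : nz → ℝ) :
    ((fromBlocks B₁ 0 0 B₂) * fromRows (1 : Matrix nz nz ℝ) 1) *ᵥ w
      = Sum.elim (B₁ *ᵥ w) (B₂ *ᵥ w) := by
  rw [show (fromBlocks B₁ 0 0 B₂ * fromRows (1 : Matrix nz nz ℝ) 1) *ᵥ w
      = fromBlocks B₁ 0 0 B₂ *ᵥ (fromRows (1 : Matrix nz nz ℝ) 1 *ᵥ w) from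
      (mulVec_mulVec _ _ _).symm, fromRows_mulVec, one_mulVec, blockdiag_mulVec]

lemma cross_quad {a b : Type*} [Fintype a] [Fintype b]
    (P : Matrix a b ℝ) (Q : Matrix b a ℝ) (c d : ℝ) (x : a → ℝ) (y : b → ℝ) :
    Sum.elim (c • x) (d • y) ⬝ᵥ (fromBlocks 0 P Q 0) *ᵥ Sum.elim (c • x) (d • y)
      = (c * d) * (Sum.elim x y ⬝ᵥ (fromBlocks 0 P Q 0) *ᵥ Sum.elim x y) := by
  rw [fromBlocks_mulVec, fromBlocks_mulVec]
  simp only [zero_mulVec, add_zero, zero_add, sumElim_dotProduct_sumElim,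
    Sum.elim_comp_inl, Sum.elim_comp_inr, mulVec_smul, smul_dotProduct,
    dotProduct_smul, smul_eq_mul, smul_zero, zero_add, add_zero, dotProduct_add]
  ring

lemma transp_dot {a b : Type*} [Fintype a] [Fintype b] (N : Matrix a b ℝ) (x : b → ℝ)
    (u : a → ℝ) : x ⬝ᵥ Nᵀ *ᵥ u = N *ᵥ x ⬝ᵥ u := by
  rw [Matrix.dotProduct_mulVec, Matrix.vecMul_transpose]



lemma kyp_quadform {n m q : Type*} [Fintype n] [Fintype m] [Fintype q]
    (R : Matrix n n ℝ) (M : Matrix q q ℝ) (A : Matrix n n ℝ) (B : Matrix n m ℝ)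
    (C : Matrix q n ℝ) (D : Matrix q m ℝ) (x : n → ℝ) (w : m → ℝ) :
    Sum.elim x w ⬝ᵥ (KYP R M A B C D) *ᵥ Sum.elim x w
      = ((A *ᵥ x + B *ᵥ w) ⬝ᵥ R *ᵥ x + x ⬝ᵥ R *ᵥ (A *ᵥ x + B *ᵥ w))
        + (C *ᵥ x + D *ᵥ w) ⬝ᵥ M *ᵥ (C *ᵥ x + D *ᵥ w) := by
  rw [KYP, fromBlocks_mulVec]
  simp only [Sum.elim_comp_inl, Sum.elim_comp_inr, sumElim_dotProduct_sumElim,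
    Matrix.add_mulVec, Matrix.mulVec_add, dotProduct_add, add_dotProduct,
    ← Matrix.mulVec_mulVec, transp_dot]
  ring





lemma continuous_mulVec {k q : Type*} [Fintype k] [Fintype q] (N : Matrix q k ℝ)
    {w : ℝ → k → ℝ} (hw : Continuous w) : Continuous (fun t => N *ᵥ w t) := by
  apply continuous_pi
  intro i
  simp only [Matrix.mulVec, dotProduct]
  exact continuous_finset_sum _ fun j _ => continuous_const.mul ((continuous_apply j).comp hw)

lemma measurable_mulVec_z {q : Type*} [Fintype q] (N : Matrix q (Fin p) ℝ)
    (hzm : Measurable z) : Measurable (fun t => N *ᵥ z t) := by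
  apply measurable_pi_lambda
  intro i
  simp only [Matrix.mulVec, dotProduct]
  exact Finset.measurable_sum _ fun j _ =>
    (measurable_const.mul ((measurable_pi_apply j).comp hzm))

lemma z_comp_integrable (hzm : Measurable z)
    (hz2 : IntegrableOn (fun t => ‖z t‖ ^ 2) (Ioc 0 T) volume) (l : Fin p) :
    IntegrableOn (fun t => z t l) (Ioc 0 T) volume := by
  have hb : Integrable (fun t => 1 + ‖z t‖ ^ 2) (volume.restrict (Ioc 0 T)) :=
    (integrable_const 1).add hz2
  refine hb.mono' ((measurable_pi_apply l).comp hzm).aestronglyMeasurable ?_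
  filter_upwards with t
  have h0 : |z t l| ≤ ‖z t‖ := by
    simpa [Real.norm_eq_abs] using norm_le_pi_norm (z t) l
  have h1 : ‖z t‖ ≤ 1 + ‖z t‖ ^ 2 := by nlinarith [norm_nonneg (z t)]
  simp only [Real.norm_eq_abs]
  exact h0.trans h1

lemma dot_z_integrable (hzm : Measurable z)
    (hz2 : IntegrableOn (fun t => ‖z t‖ ^ 2) (Ioc 0 T) volume) (c : Fin p → ℝ) :
    IntegrableOn (fun t => c ⬝ᵥ z t) (Ioc 0 T) volume := by
  simp only [dotProduct]
  exact integrable_finset_sum _ fun l _ => (z_comp_integrable hzm hz2 l).const_mul _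

lemma dotz_mul_dotz_integrable (hzm : Measurable z)
    (hz2 : IntegrableOn (fun t => ‖z t‖ ^ 2) (Ioc 0 T) volume) (c₁ c₂ : Fin p → ℝ) :
    IntegrableOn (fun t => (c₁ ⬝ᵥ z t) * (c₂ ⬝ᵥ z t)) (Ioc 0 T) volume := by
  set C : ℝ := (∑ l, |c₁ l|) * (∑ l, |c₂ l|) with hC
  have hkey : ∀ (c : Fin p → ℝ) (t : ℝ), |c ⬝ᵥ z t| ≤ (∑ l, |c l|) * ‖z t‖ := by
    intro c t
    calc |c ⬝ᵥ z t| ≤ ∑ l, |c l * z t l| := Finset.abs_sum_le_sum_abs _ _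
      _ ≤ ∑ l, |c l| * ‖z t‖ := by
          refine Finset.sum_le_sum fun l _ => ?_
          rw [abs_mul]
          refine mul_le_mul_of_nonneg_left ?_ (abs_nonneg _)
          simpa [Real.norm_eq_abs] using norm_le_pi_norm (z t) l
      _ = (∑ l, |c l|) * ‖z t‖ := by rw [Finset.sum_mul]
  refine (hz2.const_mul C).mono' ?_ ?_
  · exact (((Finset.measurable_sum (f := fun l t => c₁ l * z t l) Finset.univ fun l _ =>
      measurable_const.mul ((measurable_pi_apply l).comp hzm)).mul
      ((Finset.measurable_sum (f := fun l t => c₂ l * z t l) Finset.univ fun l _ =>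
      measurable_const.mul ((measurable_pi_apply l).comp hzm)))).aestronglyMeasurable).congr
      (by filter_upwards with t; simp [dotProduct])
  · filter_upwards with t
    have h1 := hkey c₁ t
    have h2 := hkey c₂ t
    have hnn : (0:ℝ) ≤ ‖z t‖ := norm_nonneg _
    have hs1 : (0:ℝ) ≤ ∑ l, |c₁ l| := Finset.sum_nonneg fun l _ => abs_nonneg _
    have hs2 : (0:ℝ) ≤ ∑ l, |c₂ l| := Finset.sum_nonneg fun l _ => abs_nonneg _
    simp only [Real.norm_eq_abs, abs_mul]
    calc |c₁ ⬝ᵥ z t| * |c₂ ⬝ᵥ z t| ≤ ((∑ l, |c₁ l|) * ‖z t‖) * ((∑ l, |c₂ l|) * ‖z t‖) := by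
          exact mul_le_mul h1 h2 (abs_nonneg _) (by positivity)
      _ = C * ‖z t‖ ^ 2 := by rw [hC]; ring



lemma smul_elim {k1 k2 : Type*} (c : ℝ) (a : k1 → ℝ) (b : k2 → ℝ) :
    c • Sum.elim a b = Sum.elim (c • a) (c • b) := by
  funext i; cases i <;> simp

lemma quad_zero_left {a b : Type*} [Fintype a] [Fintype b]
    (P : Matrix a b ℝ) (Q : Matrix b a ℝ) (y : b → ℝ) :
    Sum.elim (0 : a → ℝ) y ⬝ᵥ (fromBlocks 0 P Q 0) *ᵥ Sum.elim (0 : a → ℝ) y = 0 := by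
  rw [fromBlocks_mulVec]
  simp

lemma quad_zero_right {a b : Type*} [Fintype a] [Fintype b]
    (P : Matrix a b ℝ) (Q : Matrix b a ℝ) (x : a → ℝ) :
    Sum.elim x (0 : b → ℝ) ⬝ᵥ (fromBlocks 0 P Q 0) *ᵥ Sum.elim x (0 : b → ℝ) = 0 := by
  rw [fromBlocks_mulVec]
  simp

lemma integrableOn_pi_of_comp {k : Type*} [Fintype k] {f : ℝ → k → ℝ} (hm : Measurable f)
    (h : ∀ i, IntegrableOn (fun t => f t i) (Set.Ioc 0 T) volume) :
    IntegrableOn f (Set.Ioc 0 T) volume := by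
  have hb : Integrable (fun t => ∑ i, |f t i|) (volume.restrict (Set.Ioc 0 T)) :=
    integrable_finset_sum _ fun i _ => (h i).abs
  refine hb.mono' hm.aestronglyMeasurable ?_
  filter_upwards with t
  refine (pi_norm_le_iff_of_nonneg (Finset.sum_nonneg fun i _ => abs_nonneg _)).2 fun i => ?_
  simpa [Real.norm_eq_abs] using
    Finset.single_le_sum (f := fun j => |f t j|) (fun j _ => abs_nonneg _) (Finset.mem_univ i)

lemma measurable_affine {k q : Type*} [Fintype k] [Fintype q]
    (Cw : Matrix q k ℝ) (N : Matrix q (Fin p) ℝ) {w : ℝ → k → ℝ}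
    (hw : Continuous w) (hzm : Measurable z) :
    Measurable (fun t => Cw *ᵥ w t + N *ᵥ z t) :=
  ((continuous_mulVec Cw hw).measurable).add (measurable_mulVec_z N hzm)

lemma integrableOn_affine {k q : Type*} [Fintype k] [Fintype q]
    (Cw : Matrix q k ℝ) (N : Matrix q (Fin p) ℝ) {w : ℝ → k → ℝ}
    (hw : Continuous w) (hzm : Measurable z)
    (hz2 : IntegrableOn (fun t => ‖z t‖ ^ 2) (Set.Ioc 0 T) volume) :
    IntegrableOn (fun t => Cw *ᵥ w t + N *ᵥ z t) (Set.Ioc 0 T) volume := by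
  apply integrableOn_pi_of_comp (measurable_affine Cw N hw hzm)
  intro i
  have hrw : (fun t => (Cw *ᵥ w t + N *ᵥ z t) i)
      = fun t => (Cw *ᵥ w t) i + (fun l => N i l) ⬝ᵥ z t := rfl
  rw [hrw]
  exact (((continuous_apply i).comp (continuous_mulVec Cw hw)).integrableOn_Ioc).add
    (dot_z_integrable hzm hz2 _)

lemma affine_mul_affine_integrable (hzm : Measurable z)
    (hz2 : IntegrableOn (fun t => ‖z t‖ ^ 2) (Set.Ioc 0 T) volume)
    {a₁ a₂ : ℝ → ℝ} (ha₁ : Continuous a₁) (ha₂ : Continuous a₂) (c₁ c₂ : Fin p → ℝ) :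
    IntegrableOn (fun t => (a₁ t + c₁ ⬝ᵥ z t) * (a₂ t + c₂ ⬝ᵥ z t)) (Set.Ioc 0 T) volume := by
  have h1 : IntegrableOn (fun t => a₁ t * a₂ t) (Set.Ioc 0 T) volume :=
    (ha₁.mul ha₂).integrableOn_Ioc
  have h2 : IntegrableOn (fun t => a₁ t * (c₂ ⬝ᵥ z t)) (Set.Ioc 0 T) volume :=
    continuous_mul_integrableOn ha₁ (dot_z_integrable hzm hz2 c₂)
  have h3 : IntegrableOn (fun t => a₂ t * (c₁ ⬝ᵥ z t)) (Set.Ioc 0 T) volume :=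
    continuous_mul_integrableOn ha₂ (dot_z_integrable hzm hz2 c₁)
  have h4 := dotz_mul_dotz_integrable hzm hz2 c₁ c₂
  have hrw : (fun t => (a₁ t + c₁ ⬝ᵥ z t) * (a₂ t + c₂ ⬝ᵥ z t))
      = fun t => a₁ t * a₂ t + (a₁ t * (c₂ ⬝ᵥ z t) + (a₂ t * (c₁ ⬝ᵥ z t)
          + (c₁ ⬝ᵥ z t) * (c₂ ⬝ᵥ z t))) := by
    funext t; ring
  rw [hrw]
  exact h1.add (h2.add (h3.add h4))

lemma quad_affine_integrable {k q : Type*} [Fintype k] [Fintype q]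
    (M : Matrix q q ℝ) (Cw : Matrix q k ℝ) (N : Matrix q (Fin p) ℝ) {w : ℝ → k → ℝ}
    (hw : Continuous w) (hzm : Measurable z)
    (hz2 : IntegrableOn (fun t => ‖z t‖ ^ 2) (Set.Ioc 0 T) volume) :
    IntegrableOn
      (fun t => (Cw *ᵥ w t + N *ᵥ z t) ⬝ᵥ M *ᵥ (Cw *ᵥ w t + N *ᵥ z t))
      (Set.Ioc 0 T) volume := by
  have hrw : (fun t => (Cw *ᵥ w t + N *ᵥ z t) ⬝ᵥ M *ᵥ (Cw *ᵥ w t + N *ᵥ z t))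
      = fun t => ∑ i, ∑ j, M i j *
          (((Cw *ᵥ w t) i + (fun l => N i l) ⬝ᵥ z t)
            * ((Cw *ᵥ w t) j + (fun l => N j l) ⬝ᵥ z t)) := by
    funext t
    exact sum_sum_eq_dot M _ _
  rw [hrw]
  refine integrable_finset_sum _ fun i _ => integrable_finset_sum _ fun j _ => ?_
  exact (affine_mul_affine_integrable hzm hz2
    ((continuous_apply i).comp (continuous_mulVec Cw hw))
    ((continuous_apply j).comp (continuous_mulVec Cw hw)) _ _).const_mul _

lemma dot_affine_integrable {k q : Type*} [Fintype k] [Fintype q]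
    (Cw : Matrix q k ℝ) (N : Matrix q (Fin p) ℝ) {w : ℝ → k → ℝ} {φ : ℝ → q → ℝ}
    (hφ : Continuous φ) (hw : Continuous w) (hzm : Measurable z)
    (hz2 : IntegrableOn (fun t => ‖z t‖ ^ 2) (Set.Ioc 0 T) volume) :
    IntegrableOn (fun t => φ t ⬝ᵥ (Cw *ᵥ w t + N *ᵥ z t)) (Set.Ioc 0 T) volume := by
  have hrw : (fun t => φ t ⬝ᵥ (Cw *ᵥ w t + N *ᵥ z t))
      = fun t => ∑ i, (φ t i * (Cw *ᵥ w t) i + φ t i * ((fun l => N i l) ⬝ᵥ z t)) := by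
    funext t
    simp only [dotProduct]
    exact Finset.sum_congr rfl fun i _ => mul_add _ _ _
  rw [hrw]
  refine integrable_finset_sum _ fun i _ => ?_
  exact ((((continuous_apply i).comp hφ).mul
      ((continuous_apply i).comp (continuous_mulVec Cw hw))).integrableOn_Ioc).add
    (continuous_mul_integrableOn ((continuous_apply i).comp hφ)
      (dot_z_integrable hzm hz2 _))


end AuxLemmas

/-- Theorem 10: parametric uncertainties satisfy a finite-horizon IQC with the
convexly constrained structured terminal cost `[[0, K], [Kᵀ, 0]]`. -/
theorem parametric_finite_horizon_iqc
    {nz k₁ k₂ m₁ m₂ : ℕ} (α β : ℝ) (hα : α < 0) (hβ : 0 < β)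
    (A₁ : Matrix (Fin k₁) (Fin k₁) ℝ) (A₂ : Matrix (Fin k₂) (Fin k₂) ℝ)
    (B₁ : Matrix (Fin k₁) (Fin nz) ℝ) (B₂ : Matrix (Fin k₂) (Fin nz) ℝ)
    (C₁ : Matrix (Fin m₁) (Fin k₁) ℝ) (C₂ : Matrix (Fin m₂) (Fin k₂) ℝ)
    (D₁ : Matrix (Fin m₁) (Fin nz) ℝ) (D₂ : Matrix (Fin m₂) (Fin nz) ℝ)
    (hA₁ : IsHurwitz A₁) (hA₂ : IsHurwitz A₂)
    (P : Matrix (Fin m₁) (Fin m₂) ℝ)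
    (R : Matrix (Fin k₁ ⊕ Fin k₂) (Fin k₁ ⊕ Fin k₂) ℝ) (hR : R.IsSymm)
    (K : Matrix (Fin k₁) (Fin k₂) ℝ)
    (hKYP : (KYP R (fromBlocks 0 P Pᵀ 0)
        (fromBlocks A₁ 0 0 A₂)
        ((fromBlocks B₁ 0 0 B₂) * fromRows (1 : Matrix (Fin nz) (Fin nz) ℝ) 1)
        (fromBlocks C₁ 0 0 C₂)
        ((fromBlocks D₁ 0 0 D₂) * fromRows (1 : Matrix (Fin nz) (Fin nz) ℝ) 1)).PosDef)
    (hcoup : (-(R - fromBlocks 0 K Kᵀ 0)).PosDef) :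
    ∀ δ : ℝ, α ≤ δ → δ ≤ β →
      FiniteHorizonIQC nz nz
        (fromBlocks A₁ 0 0 A₂)
        ((fromBlocks B₁ 0 0 B₂) *
          (fromBlocks 1 (-β⁻¹ • (1 : Matrix (Fin nz) (Fin nz) ℝ))
            (-α • (1 : Matrix (Fin nz) (Fin nz) ℝ)) 1))
        (fromBlocks C₁ 0 0 C₂)
        ((fromBlocks D₁ 0 0 D₂) *
          (fromBlocks 1 (-β⁻¹ • (1 : Matrix (Fin nz) (Fin nz) ℝ))
            (-α • (1 : Matrix (Fin nz) (Fin nz) ℝ)) 1))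
        (fromBlocks 0 P Pᵀ 0)
        (fromBlocks 0 K Kᵀ 0)
        (fun z => fun t => δ • z t) := by
  intro δ hδl hδu
  unfold FiniteHorizonIQC
  intro z hz ξ hξtraj T' hT'
  unfold IsFilterTraj at hξtraj
  obtain ⟨hξc, hξ0, hξeq⟩ := hξtraj
  obtain ⟨hzm, hz2all⟩ := hz
  set c₁ : ℝ := 1 - δ * β⁻¹ with hc₁def
  set c₂ : ℝ := δ - α with hc₂def
  have hβ0 : β ≠ 0 := ne_of_gt hβ
  have hc₁nn : 0 ≤ c₁ := by
    have h := (div_le_one hβ).2 hδu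
    rw [div_eq_mul_inv] at h
    simp only [hc₁def]; linarith
  have hc₂nn : 0 ≤ c₂ := by simp only [hc₂def]; linarith
  set Am := fromBlocks A₁ 0 0 A₂ with hAm
  set Bm := fromBlocks B₁ 0 0 B₂ with hBm
  set Cm := fromBlocks C₁ 0 0 C₂ with hCm
  set Dm := fromBlocks D₁ 0 0 D₂ with hDm
  set Tm : Matrix (Fin nz ⊕ Fin nz) (Fin nz ⊕ Fin nz) ℝ :=
    fromBlocks 1 (-β⁻¹ • (1 : Matrix (Fin nz) (Fin nz) ℝ))
      (-α • (1 : Matrix (Fin nz) (Fin nz) ℝ)) 1 with hTmdef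
  set Mm : Matrix (Fin m₁ ⊕ Fin m₂) (Fin m₁ ⊕ Fin m₂) ℝ := fromBlocks 0 P Pᵀ 0 with hMmdef
  set Zm : Matrix (Fin k₁ ⊕ Fin k₂) (Fin k₁ ⊕ Fin k₂) ℝ := fromBlocks 0 K Kᵀ 0 with hZmdef
  set Jm : Matrix (Fin nz ⊕ Fin nz) (Fin nz) ℝ :=
    fromRows (1 : Matrix (Fin nz) (Fin nz) ℝ) 1 with hJmdef
  set W : Matrix (Fin nz ⊕ Fin nz) (Fin nz) ℝ :=
    fromRows (1 : Matrix (Fin nz) (Fin nz) ℝ) (δ • 1) with hWdef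
  have hWv : ∀ t, W *ᵥ z t = Sum.elim (z t) (δ • z t) := by
    intro t
    rw [hWdef, fromRows_mulVec, one_mulVec, smul_mulVec, one_mulVec]
  set S : Matrix (Fin k₁ ⊕ Fin k₂) (Fin k₁ ⊕ Fin k₂) ℝ :=
    fromBlocks (c₂ • (1 : Matrix (Fin k₁) (Fin k₁) ℝ)) 0 0
      (c₁ • (1 : Matrix (Fin k₂) (Fin k₂) ℝ)) with hSdef
  have hS : ∀ v : (Fin k₁ ⊕ Fin k₂) → ℝ,
      S *ᵥ v = Sum.elim (c₂ • (v ∘ Sum.inl)) (c₁ • (v ∘ Sum.inr)) := by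
    intro v
    conv_lhs => rw [← Sum.elim_comp_inl_inr v]
    rw [hSdef, smulblock_mulVec]
  set η : ℝ → (Fin k₁ ⊕ Fin k₂) → ℝ := fun t => S *ᵥ ξ t with hηdef
  have hηelim : ∀ t, η t = Sum.elim (c₂ • (ξ t ∘ Sum.inl)) (c₁ • (ξ t ∘ Sum.inr)) :=
    fun t => hS (ξ t)
  have hηc : Continuous η := by
    have : η = fun t => Sum.elim (c₂ • (ξ t ∘ Sum.inl)) (c₁ • (ξ t ∘ Sum.inr)) :=
      funext hηelim
    rw [this]
    apply continuous_pi
    intro i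
    cases i with
    | inl i =>
        exact continuous_const.mul ((continuous_apply (Sum.inl i)).comp hξc)
    | inr i =>
        exact continuous_const.mul ((continuous_apply (Sum.inr i)).comp hξc)
  set g : ℝ → (Fin k₁ ⊕ Fin k₂) → ℝ :=
    fun t => Am *ᵥ ξ t + ((Bm * Tm) * W) *ᵥ z t with hgdef
  have hgeq : ∀ t, Am *ᵥ ξ t + (Bm * Tm) *ᵥ (Sum.elim (z t) (δ • z t)) = g t := by
    intro t
    rw [hgdef]
    simp only []
    rw [← hWv t, Matrix.mulVec_mulVec]
  have hξeq' : ∀ t : ℝ, 0 ≤ t → ξ t = ∫ s in (0:ℝ)..t, g s := by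
    intro t ht
    rw [hξeq t ht]
    apply intervalIntegral.integral_congr
    intro s _
    exact hgeq s
  have hgdecomp : ∀ t, g t = Sum.elim
      (A₁ *ᵥ (ξ t ∘ Sum.inl) + c₁ • (B₁ *ᵥ z t))
      (A₂ *ᵥ (ξ t ∘ Sum.inr) + c₂ • (B₂ *ᵥ z t)) := by
    intro t
    rw [hgdef]
    simp only []
    rw [← Matrix.mulVec_mulVec, hWv t, ← Matrix.mulVec_mulVec, hTmdef,
      Tm_mulVec α β δ (z t), ← hc₁def, ← hc₂def, hBm, blockdiag_mulVec]
    conv_lhs => rw [← Sum.elim_comp_inl_inr (ξ t)]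
    rw [hAm, blockdiag_mulVec, elim_add, Matrix.mulVec_smul, Matrix.mulVec_smul]
  set gη : ℝ → (Fin k₁ ⊕ Fin k₂) → ℝ :=
    fun t => Am *ᵥ η t + ((c₁ * c₂) • (Bm * Jm)) *ᵥ z t with hgηdef
  have hgηdecomp : ∀ t, gη t = Sum.elim
      (A₁ *ᵥ (c₂ • (ξ t ∘ Sum.inl)) + (c₁ * c₂) • (B₁ *ᵥ z t))
      (A₂ *ᵥ (c₁ • (ξ t ∘ Sum.inr)) + (c₁ * c₂) • (B₂ *ᵥ z t)) := by
    intro t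
    rw [hgηdef]
    simp only []
    rw [hηelim t, hAm, blockdiag_mulVec, smul_mulVec, hBm, hJmdef]
    erw [J_mulVec]
    rw [
      smul_elim, elim_add]
  have hSg : ∀ t, S *ᵥ g t = gη t := by
    intro t
    rw [hgdecomp t, hSdef, smulblock_mulVec, hgηdecomp t]
    funext j
    cases j <;>
      simp only [Sum.elim_inl, Sum.elim_inr, Pi.add_apply, Pi.smul_apply,
        Matrix.mulVec_smul, smul_eq_mul] <;> ring
  set y : ℝ → (Fin m₁ ⊕ Fin m₂) → ℝ :=
    fun t => Cm *ᵥ ξ t + ((Dm * Tm) * W) *ᵥ z t with hydef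
  have hyeq : ∀ t, Cm *ᵥ ξ t + (Dm * Tm) *ᵥ (Sum.elim (z t) (δ • z t)) = y t := by
    intro t
    rw [hydef]
    simp only []
    rw [← hWv t, Matrix.mulVec_mulVec]
  have hydecomp : ∀ t, y t = Sum.elim
      (C₁ *ᵥ (ξ t ∘ Sum.inl) + c₁ • (D₁ *ᵥ z t))
      (C₂ *ᵥ (ξ t ∘ Sum.inr) + c₂ • (D₂ *ᵥ z t)) := by
    intro t
    rw [hydef]
    simp only []
    rw [← Matrix.mulVec_mulVec, hWv t, ← Matrix.mulVec_mulVec, hTmdef,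
      Tm_mulVec α β δ (z t), ← hc₁def, ← hc₂def, hDm, blockdiag_mulVec]
    conv_lhs => rw [← Sum.elim_comp_inl_inr (ξ t)]
    rw [hCm, blockdiag_mulVec, elim_add, Matrix.mulVec_smul, Matrix.mulVec_smul]
  set yt : ℝ → (Fin m₁ ⊕ Fin m₂) → ℝ :=
    fun t => Cm *ᵥ η t + ((c₁ * c₂) • (Dm * Jm)) *ᵥ z t with hytdef
  have hytdecomp : ∀ t, yt t = Sum.elim
      (C₁ *ᵥ (c₂ • (ξ t ∘ Sum.inl)) + (c₁ * c₂) • (D₁ *ᵥ z t))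
      (C₂ *ᵥ (c₁ • (ξ t ∘ Sum.inr)) + (c₁ * c₂) • (D₂ *ᵥ z t)) := by
    intro t
    rw [hytdef]
    simp only []
    rw [hηelim t, hCm, blockdiag_mulVec, smul_mulVec, hDm, hJmdef]
    erw [J_mulVec]
    rw [
      smul_elim, elim_add]
  have hytscale : ∀ t, yt t = Sum.elim
      (c₂ • (C₁ *ᵥ (ξ t ∘ Sum.inl) + c₁ • (D₁ *ᵥ z t)))
      (c₁ • (C₂ *ᵥ (ξ t ∘ Sum.inr) + c₂ • (D₂ *ᵥ z t))) := by
    intro t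
    rw [hytdecomp t]
    funext j
    cases j <;>
      simp only [Sum.elim_inl, Sum.elim_inr, Pi.add_apply, Pi.smul_apply,
        Matrix.mulVec_smul, smul_eq_mul] <;> ring
  have hF5 : ∀ t, yt t ⬝ᵥ Mm *ᵥ yt t = (c₂ * c₁) * (y t ⬝ᵥ Mm *ᵥ y t) := by
    intro t
    rw [hytscale t, hydecomp t, hMmdef]
    exact cross_quad P Pᵀ c₂ c₁ _ _
  have hZquad : ∀ t, η t ⬝ᵥ Zm *ᵥ η t = (c₂ * c₁) * (ξ t ⬝ᵥ Zm *ᵥ ξ t) := by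
    intro t
    conv_rhs => rw [← Sum.elim_comp_inl_inr (ξ t)]
    rw [hηelim t, hZmdef]
    exact cross_quad K Kᵀ c₂ c₁ _ _
  have hRle : ∀ x : (Fin k₁ ⊕ Fin k₂) → ℝ, x ⬝ᵥ R *ᵥ x ≤ x ⬝ᵥ Zm *ᵥ x := by
    intro x
    have h := hcoup.posSemidef.dotProduct_mulVec_nonneg x
    rw [star_trivial, neg_sub, Matrix.sub_mulVec, dotProduct_sub] at h
    linarith
  have hRlt : ∀ x : (Fin k₁ ⊕ Fin k₂) → ℝ, x ≠ 0 → x ⬝ᵥ R *ᵥ x < x ⬝ᵥ Zm *ᵥ x := by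
    intro x hx
    have h := hcoup.dotProduct_mulVec_pos hx
    rw [star_trivial, neg_sub, Matrix.sub_mulVec, dotProduct_sub] at h
    linarith
  have hKYPle : ∀ v : ((Fin k₁ ⊕ Fin k₂) ⊕ Fin nz) → ℝ,
      0 ≤ v ⬝ᵥ (KYP R Mm Am (Bm * Jm) Cm (Dm * Jm)) *ᵥ v := by
    intro v
    have h := hKYP.posSemidef.dotProduct_mulVec_nonneg v
    rwa [star_trivial] at h
  have hpos : ∀ t, 0 ≤ (gη t ⬝ᵥ R *ᵥ η t + η t ⬝ᵥ R *ᵥ gη t) + yt t ⬝ᵥ Mm *ᵥ yt t := by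
    intro t
    have h := hKYPle (Sum.elim (η t) ((c₁ * c₂) • z t))
    rw [kyp_quadform] at h
    have e1 : Am *ᵥ η t + (Bm * Jm) *ᵥ ((c₁ * c₂) • z t) = gη t := by
      rw [hgηdef]
      simp only []
      rw [Matrix.mulVec_smul, smul_mulVec]
    have e2 : Cm *ᵥ η t + (Dm * Jm) *ᵥ ((c₁ * c₂) • z t) = yt t := by
      rw [hytdef]
      simp only []
      rw [Matrix.mulVec_smul, smul_mulVec]
    rw [e1, e2] at h
    linarith
  have KEY : ∀ τ : ℝ, 0 < τ →
      0 ≤ (c₂ * c₁) * (∫ t in Set.Ioc (0:ℝ) τ, y t ⬝ᵥ Mm *ᵥ y t) + η τ ⬝ᵥ R *ᵥ η τ := by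
    intro τ hτ
    have hz2 := hz2all τ hτ
    have hgηi : IntegrableOn gη (Set.Ioc 0 τ) volume := by
      rw [hgηdef]
      exact integrableOn_affine Am ((c₁ * c₂) • (Bm * Jm)) hηc hzm hz2
    have hgηm : Measurable gη := by
      rw [hgηdef]
      exact measurable_affine Am ((c₁ * c₂) • (Bm * Jm)) hηc hzm
    have hηint : ∀ t : ℝ, 0 ≤ t → η t = ∫ s in (0:ℝ)..t, gη s := by
      intro t ht
      rcases eq_or_lt_of_le ht with h0 | hpos'
      · rw [← h0, intervalIntegral.integral_same, hηdef]
        simp only []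
        rw [hξ0, Matrix.mulVec_zero]
      · have hgi : IntegrableOn g (Set.Ioc 0 t) volume := by
          rw [hgdef]
          exact integrableOn_affine Am ((Bm * Tm) * W) hξc hzm (hz2all t hpos')
        have hgii : IntervalIntegrable g volume 0 t :=
          (intervalIntegrable_iff_integrableOn_Ioc_of_le ht).2 hgi
        set L : ((Fin k₁ ⊕ Fin k₂) → ℝ) →L[ℝ] ((Fin k₁ ⊕ Fin k₂) → ℝ) :=
          LinearMap.toContinuousLinearMap (Matrix.mulVecLin S) with hLdef
        calc η t = L (ξ t) := rfl
          _ = L (∫ s in (0:ℝ)..t, g s) := by rw [hξeq' t ht]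
          _ = ∫ s in (0:ℝ)..t, L (g s) := (L.intervalIntegral_comp_comm hgii).symm
          _ = ∫ s in (0:ℝ)..t, gη s := by
              apply intervalIntegral.integral_congr
              intro s _
              exact hSg s
    have energy := energy_identity hτ.le R gη η hgηm hgηi hηc hηint
    have hFqi : IntegrableOn (fun t => yt t ⬝ᵥ Mm *ᵥ yt t) (Set.Ioc 0 τ) volume := by
      have := quad_affine_integrable (z := z) Mm Cm ((c₁ * c₂) • (Dm * Jm)) hηc hzm hz2
      refine this.congr_fun (fun t _ => ?_) measurableSet_Ioc
      rw [hytdef]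
    have hFei : IntegrableOn (fun t => gη t ⬝ᵥ R *ᵥ η t + η t ⬝ᵥ R *ᵥ gη t)
        (Set.Ioc 0 τ) volume := by
      have h1 : IntegrableOn (fun t => gη t ⬝ᵥ R *ᵥ η t) (Set.Ioc 0 τ) volume := by
        have := dot_affine_integrable (z := z) Am ((c₁ * c₂) • (Bm * Jm))
          (continuous_mulVec R hηc) hηc hzm hz2
        refine this.congr_fun (fun t _ => ?_) measurableSet_Ioc
        rw [dotProduct_comm, hgηdef]
      have h2 : IntegrableOn (fun t => η t ⬝ᵥ R *ᵥ gη t) (Set.Ioc 0 τ) volume := by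
        have := dot_affine_integrable (z := z) Am ((c₁ * c₂) • (Bm * Jm))
          (continuous_mulVec Rᵀ hηc) hηc hzm hz2
        refine this.congr_fun (fun t _ => ?_) measurableSet_Ioc
        have hrw : η t ⬝ᵥ R *ᵥ gη t = (Rᵀ *ᵥ η t) ⬝ᵥ gη t := by
          conv_lhs => rw [show R = Rᵀᵀ from (Matrix.transpose_transpose R).symm]
          rw [transp_dot]
        rw [hrw, hgηdef]
      exact h1.add h2
    have h1 : 0 ≤ ∫ t in Set.Ioc (0:ℝ) τ,
        ((gη t ⬝ᵥ R *ᵥ η t + η t ⬝ᵥ R *ᵥ gη t) + yt t ⬝ᵥ Mm *ᵥ yt t) :=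
      setIntegral_nonneg measurableSet_Ioc fun t _ => hpos t
    rw [integral_add hFei hFqi, ← energy] at h1
    have h2 : ∫ t in Set.Ioc (0:ℝ) τ, yt t ⬝ᵥ Mm *ᵥ yt t
        = (c₂ * c₁) * ∫ t in Set.Ioc (0:ℝ) τ, y t ⬝ᵥ Mm *ᵥ y t := by
      rw [← MeasureTheory.integral_const_mul]
      exact setIntegral_congr_fun measurableSet_Ioc fun t _ => hF5 t
    rw [h2] at h1
    linarith
  have hgoal : (∫ t in (0:ℝ)..T',
        (Cm *ᵥ ξ t + (Dm * Tm) *ᵥ (Sum.elim (z t) (δ • z t))) ⬝ᵥ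
          Mm *ᵥ (Cm *ᵥ ξ t + (Dm * Tm) *ᵥ (Sum.elim (z t) (δ • z t))))
      = ∫ t in Set.Ioc (0:ℝ) T', y t ⬝ᵥ Mm *ᵥ y t := by
    rw [intervalIntegral.integral_of_le hT'.le]
    exact setIntegral_congr_fun measurableSet_Ioc fun t _ => by rw [hyeq t]
  show 0 ≤ (∫ t in (0:ℝ)..T',
        (Cm *ᵥ ξ t + (Dm * Tm) *ᵥ (Sum.elim (z t) (δ • z t))) ⬝ᵥ
          Mm *ᵥ (Cm *ᵥ ξ t + (Dm * Tm) *ᵥ (Sum.elim (z t) (δ • z t))))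
      + ξ T' ⬝ᵥ Zm *ᵥ ξ T'
  rw [hgoal]
  rcases lt_or_eq_of_le (mul_nonneg hc₂nn hc₁nn) with hcc | hcc
  · have hK := KEY T' hT'
    have hZ := hZquad T'
    have hRc := hRle (η T')
    have hfin : 0 ≤ (c₂ * c₁) *
        ((∫ t in Set.Ioc (0:ℝ) T', y t ⬝ᵥ Mm *ᵥ y t) + ξ T' ⬝ᵥ Zm *ᵥ ξ T') := by
      rw [mul_add]
      linarith
    nlinarith
  · have hη0 : ∀ τ : ℝ, 0 ≤ τ → η τ = 0 := by
      intro τ hτ0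
      rcases eq_or_lt_of_le hτ0 with h0 | hτp
      · rw [← h0, hηdef]
        simp only []
        rw [hξ0, Matrix.mulVec_zero]
      · have hK := KEY τ hτp
        rw [← hcc, zero_mul, zero_add] at hK
        by_contra hne
        have hlt := hRlt (η τ) hne
        have hZ := hZquad τ
        rw [← hcc, zero_mul] at hZ
        linarith
    rcases mul_eq_zero.mp hcc.symm with h2 | h1
    · have hc₁pos : 0 < c₁ := by
        have hδα : δ = α := by simp only [hc₂def] at h2; linarith
        have hαβ : α * β⁻¹ < 0 := mul_neg_of_neg_of_pos hα (inv_pos.2 hβ)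
        simp only [hc₁def, hδα]; linarith
      have hξ₂0 : ∀ t : ℝ, 0 ≤ t → (ξ t) ∘ Sum.inr = 0 := by
        intro t ht
        have h := hη0 t ht
        rw [hηelim t] at h
        funext i
        have hi := congrFun h (Sum.inr i)
        simp only [Sum.elim_inr, Pi.smul_apply, smul_eq_mul, Pi.zero_apply] at hi
        have h0 := (mul_eq_zero.mp hi).resolve_left (ne_of_gt hc₁pos)
        simpa using h0
      have hyzero : ∀ t : ℝ, 0 ≤ t → y t ⬝ᵥ Mm *ᵥ y t = 0 := by
        intro t ht
        rw [hydecomp t, hξ₂0 t ht, h2, hMmdef]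
        simp only [Matrix.mulVec_zero, zero_smul, zero_add, add_zero]
        exact quad_zero_right P Pᵀ _
      have hint0 : ∫ t in Set.Ioc (0:ℝ) T', y t ⬝ᵥ Mm *ᵥ y t = 0 := by
        rw [setIntegral_congr_fun measurableSet_Ioc fun t ht => hyzero t ht.1.le]
        simp
      have hterm : ξ T' ⬝ᵥ Zm *ᵥ ξ T' = 0 := by
        conv_lhs => rw [← Sum.elim_comp_inl_inr (ξ T')]
        rw [hξ₂0 T' hT'.le, hZmdef]
        exact quad_zero_right K Kᵀ _
      rw [hint0, hterm]
      norm_num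
    · have hδβ : δ = β := by
        simp only [hc₁def] at h1
        have hdb : δ * β⁻¹ = 1 := by linarith
        rw [← div_eq_mul_inv] at hdb
        exact (div_eq_one_iff_eq hβ0).1 hdb
      have hc₂pos : 0 < c₂ := by simp only [hc₂def, hδβ]; linarith
      have hξ₁0 : ∀ t : ℝ, 0 ≤ t → (ξ t) ∘ Sum.inl = 0 := by
        intro t ht
        have h := hη0 t ht
        rw [hηelim t] at h
        funext i
        have hi := congrFun h (Sum.inl i)
        simp only [Sum.elim_inl, Pi.smul_apply, smul_eq_mul, Pi.zero_apply] at hi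
        have h0 := (mul_eq_zero.mp hi).resolve_left (ne_of_gt hc₂pos)
        simpa using h0
      have hyzero : ∀ t : ℝ, 0 ≤ t → y t ⬝ᵥ Mm *ᵥ y t = 0 := by
        intro t ht
        rw [hydecomp t, hξ₁0 t ht, h1, hMmdef]
        simp only [Matrix.mulVec_zero, zero_smul, zero_add, add_zero]
        exact quad_zero_left P Pᵀ _
      have hint0 : ∫ t in Set.Ioc (0:ℝ) T', y t ⬝ᵥ Mm *ᵥ y t = 0 := by
        rw [setIntegral_congr_fun measurableSet_Ioc fun t ht => hyzero t ht.1.le]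
        simp
      have hterm : ξ T' ⬝ᵥ Zm *ᵥ ξ T' = 0 := by
        conv_lhs => rw [← Sum.elim_comp_inl_inr (ξ T')]
        rw [hξ₁0 T' hT'.le, hZmdef]
        exact quad_zero_left K Kᵀ _
      rw [hint0, hterm]
      norm_num


end IQCPaper
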